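/- Let A be a commutative ring, and let B and C be commutative A-algebras. Assume B is a Noetherian unique factorization domain, C is flat and finitely generated as an A-algebra, and for every field K that is an A-algebra, the tensor product K ⊗_A C is a unique factorization domain whose units are exactly the images of the nonzero elements of K. Let K denote the fieldของ fractions of B, so that both K and B ⊗_A C map injectively into K ⊗_A C. Then the intersection of (the image of) K with (the image of) B ⊗_A C inside K ⊗_A C equals (the image of) B: if z ∈ K ⊗_A C lies in the image of the canonical map K → K ⊗_A C and also in the image of the canonical map B ⊗_A C → K ⊗_A C, then z lies in the image of B under the composite B → K → K ⊗_A C. -/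

import Mathlib

open TensorProduct

universe u

theorem tensor_algebraMap_ne_zero (A C : Type u) [CommRing A] [CommRing C] [Algebra A C]
    (hdom : ∀ (L : Type u) [Field L] [Algebra A L], IsDomain (L ⊗[A] C))
    (D : Type u) [CommRing D] [IsDomain D] [Algebra A D]
    (x : D) (hx : x ≠ 0) :
    algebraMap D (D ⊗[A] C) x ≠ 0 := by
  intro h0
  let L := FractionRing D
  haveI := hdom L
  let ψ : (D ⊗[A] C) →ₐ[A] (L ⊗[A] C) :=
    Algebra.TensorProduct.map (IsScalarTower.toAlgHom A D L) (AlgHom.id A C)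
  have hψ : ψ (algebraMap D (D ⊗[A] C) x) = algebraMap L (L ⊗[A] C) (algebraMap D L x) := by
    simp [ψ, Algebra.TensorProduct.algebraMap_apply, Algebra.TensorProduct.map_tmul]
  have hx' : algebraMap D L x ≠ 0 := fun h => hx (IsFractionRing.injective D L (by simpa using h))
  have hu : IsUnit (algebraMap L (L ⊗[A] C) (algebraMap D L x)) :=
    (IsUnit.mk0 _ hx').map (algebraMap L (L ⊗[A] C))
  rw [← hψ, h0, map_zero] at hu
  exact hu.ne_zero rfl

/-- Under the hypotheses of the UFD tensor product proposition, with `K` the fraction field of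
`B`, the intersection of the images of `K` and of `B ⊗[A] C` inside `K ⊗[A] C` is the image
of `B`. -/
theorem fractionField_inter_tensor (A B C K : Type u) [CommRing A] [CommRing B] [CommRing C]
    [Algebra A B] [Algebra A C]
    [IsNoetherianRing B] [IsDomain B] [UniqueFactorizationMonoid B]
    [Module.Flat A C] [Algebra.FiniteType A C]
    [Field K] [Algebra B K] [IsFractionRing B K] [Algebra A K] [IsScalarTower A B K]
    (hdom : ∀ (L : Type u) [Field L] [Algebra A L], IsDomain (L ⊗[A] C))
    (hufd : ∀ (L : Type u) [Field L] [Algebra A L] [IsDomain (L ⊗[A] C)],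
      UniqueFactorizationMonoid (L ⊗[A] C))
    (hunits : ∀ (L : Type u) [Field L] [Algebra A L] (z : L ⊗[A] C),
      IsUnit z ↔ ∃ c : L, c ≠ 0 ∧ algebraMap L (L ⊗[A] C) c = z)
    (z : K ⊗[A] C)
    (hzK : ∃ c : K, algebraMap K (K ⊗[A] C) c = z)
    (hzBC : ∃ w : B ⊗[A] C,
      (Algebra.TensorProduct.map (IsScalarTower.toAlgHom A B K) (AlgHom.id A C)) w = z) :
    ∃ b : B, algebraMap K (K ⊗[A] C) (algebraMap B K b) = z := by
  obtain ⟨c, rfl⟩ := hzK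
  obtain ⟨w, hw⟩ := hzBC
  obtain ⟨a, s, hrel, hmk⟩ := IsFractionRing.exists_reduced_fraction B c
  set φ := Algebra.TensorProduct.map (IsScalarTower.toAlgHom A B K) (AlgHom.id A C) with hφ
  have hφinj : Function.Injective φ := by
    have h1 : φ.toLinearMap =
        LinearMap.rTensor C (IsScalarTower.toAlgHom A B K).toLinearMap := by
      ext b c
      rfl
    have h2 := Module.Flat.rTensor_preserves_injective_linearMap (M := C)
      (IsScalarTower.toAlgHom A B K).toLinearMap
      (by simpa using IsFractionRing.injective B K)
    rw [← h1] at h2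
    exact h2
  have hφmap : ∀ x : B, φ (algebraMap B (B ⊗[A] C) x)
      = algebraMap K (K ⊗[A] C) (algebraMap B K x) := by
    intro x
    simp [φ, Algebra.TensorProduct.algebraMap_apply, Algebra.TensorProduct.map_tmul]
  have hspec : c * algebraMap B K (s : B) = algebraMap B K a := by
    rw [← hmk]; exact IsLocalization.mk'_spec K a s
  have key : algebraMap B (B ⊗[A] C) (s : B) * w = algebraMap B (B ⊗[A] C) a := by
    apply hφinj
    rw [map_mul, hφmap, hw, hφmap, ← map_mul, mul_comm, hspec]
  -- show s is a unit
  have hs : IsUnit (s : B) := by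
    by_contra hns
    have hs0 : (s : B) ≠ 0 := nonZeroDivisors.coe_ne_zero s
    obtain ⟨p, hpirr, hpdvd⟩ := WfDvdMonoid.exists_irreducible_factor hns hs0
    have hp : Prime p := UniqueFactorizationMonoid.irreducible_iff_prime.mp hpirr
    haveI hIprime : (Ideal.span {p}).IsPrime := (Ideal.span_singleton_prime hp.ne_zero).mpr hp
    let D := B ⧸ (Ideal.span {p} : Ideal B)
    let f : B →ₐ[A] D := Ideal.Quotient.mkₐ A (Ideal.span {p})
    let ρ : (B ⊗[A] C) →ₐ[A] (D ⊗[A] C) := Algebra.TensorProduct.map f (AlgHom.id A C)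
    have hρmap : ∀ x : B, ρ (algebraMap B (B ⊗[A] C) x) = algebraMap D (D ⊗[A] C) (f x) := by
      intro x
      simp [ρ, Algebra.TensorProduct.algebraMap_apply, Algebra.TensorProduct.map_tmul]
      rfl
    have hfs : f (s : B) = 0 :=
      Ideal.Quotient.eq_zero_iff_mem.mpr (Ideal.mem_span_singleton.mpr hpdvd)
    have hfa : f a ≠ 0 := by
      rw [Ne, show f a = Ideal.Quotient.mk _ a from rfl, Ideal.Quotient.eq_zero_iff_mem,
        Ideal.mem_span_singleton]
      exact fun h => hp.not_unit (hrel h hpdvd)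
    have h0 : algebraMap D (D ⊗[A] C) (f a) = 0 := by
      have := congrArg ρ key
      rw [map_mul, hρmap, hρmap, hfs, map_zero, zero_mul] at this
      exact this.symm
    exact tensor_algebraMap_ne_zero A C hdom D (f a) hfa h0
  obtain ⟨u, hu⟩ := hs
  refine ⟨↑u⁻¹ * a, ?_⟩
  congr 1
  have hbs : ((↑u⁻¹ : B) * a) * (s : B) = a := by
    rw [← hu, mul_comm ((↑u⁻¹ : B) * a), ← mul_assoc, Units.mul_inv, one_mul]
  have hKs : algebraMap B K (s : B) ≠ 0 :=
    IsFractionRing.to_map_ne_zero_of_mem_nonZeroDivisors s.2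
  apply mul_right_cancel₀ hKs
  rw [← map_mul, hbs, hspec]
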